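/- Suppose σ and ω are rectangle reverse doubling measures on ℝ^m × ℝ^n (i.e. |sI×tJ|_μ ≤ C s^{mε} t^{nε} |I×J|_μ for 0<s,t<1 for some ε>0), and 0<α<m, 0<β<n, 1<p,q<∞. Then the no-tail, one-tail and two-tail product Muckenhoupt characteristics are all equivalent: Â^{(α,β),(m,n)}_{p,q}(σ,ω) ≈ Ā^{(α,β),(m,n)}_{p,q}(σ,ω) ≈ A^{(α,β),(m,n)}_{p,q}(σ,ω). -/

import Mathlib

open MeasureTheory ENNReal Set

noncomputable section

abbrev E (m : ℕ) := EuclideanSpace ℝ (Fin m)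

/-- The axis-parallel cube with center `c` and side length `s`. -/
def cube (m : ℕ) (c : E m) (s : ℝ) : Set (E m) :=
  {x | ∀ i, |x i - c i| ≤ s / 2}

/-- The one-parameter tail `(1 + |x−c|/s)^{α−m}`. -/
noncomputable def tail (m : ℕ) (α : ℝ) (c : E m) (s : ℝ) (x : E m) : ℝ≥0∞ :=
  ENNReal.ofReal ((1 + ‖x - c‖ / s) ^ (α - (m : ℝ)))

/-- `μ` satisfies the rectangle reverse doubling condition with constant `C₀` and exponent
`ε`: `|s'I × t'J|_μ ≤ C₀ (s'/s)^{mε} (t'/t)^{nε} |I×J|_μ` for concentric shrunken rectangles. -/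
def RectRevDoub (m n : ℕ) (ε C₀ : ℝ) (μ : Measure (E m × E n)) : Prop :=
  ∀ (c : E m) (d : E n) (s t s' t' : ℝ), 0 < s' → s' ≤ s → 0 < t' → t' ≤ t →
    μ (cube m c s' ×ˢ cube n d t')
      ≤ ENNReal.ofReal (C₀ * (s' / s) ^ ((m : ℝ) * ε) * (t' / t) ^ ((n : ℝ) * ε)) *
          μ (cube m c s ×ˢ cube n d t)

/-- The no-tail rectangle characteristic `A^{(α,β),(m,n)}_{p,q}(σ,ω)`. -/
noncomputable def Ant (m n : ℕ) (α β p q : ℝ) (σ ω : Measure (E m × E n)) : ℝ≥0∞ :=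
  ⨆ (c : E m) (d : E n) (s : ℝ) (t : ℝ) (_ : 0 < s) (_ : 0 < t),
    ENNReal.ofReal (s ^ (α - (m : ℝ)) * t ^ (β - (n : ℝ))) *
      (ω (cube m c s ×ˢ cube n d t)) ^ (1 / q) * (σ (cube m c s ×ˢ cube n d t)) ^ (1 - 1 / p)

/-- The one-tailed rectangle characteristic `Ā^{(α,β),(m,n)}_{p,q}(σ,ω)`. -/
noncomputable def Aot (m n : ℕ) (α β p q : ℝ) (σ ω : Measure (E m × E n)) : ℝ≥0∞ :=
  (⨆ (c : E m) (d : E n) (s : ℝ) (t : ℝ) (_ : 0 < s) (_ : 0 < t),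
      ENNReal.ofReal (s ^ (α - (m : ℝ)) * t ^ (β - (n : ℝ))) *
        (∫⁻ z, (tail m α c s z.1 * tail n β d t z.2) ^ q ∂ω) ^ (1 / q) *
        (σ (cube m c s ×ˢ cube n d t)) ^ (1 - 1 / p)) +
    ⨆ (c : E m) (d : E n) (s : ℝ) (t : ℝ) (_ : 0 < s) (_ : 0 < t),
      ENNReal.ofReal (s ^ (α - (m : ℝ)) * t ^ (β - (n : ℝ))) *
        (ω (cube m c s ×ˢ cube n d t)) ^ (1 / q) *
        (∫⁻ z, (tail m α c s z.1 * tail n β d t z.2) ^ (p / (p - 1)) ∂σ) ^ (1 - 1 / p)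

/-- The two-tailed rectangle characteristic `Â^{(α,β),(m,n)}_{p,q}(σ,ω)`. -/
noncomputable def Aht (m n : ℕ) (α β p q : ℝ) (σ ω : Measure (E m × E n)) : ℝ≥0∞ :=
  ⨆ (c : E m) (d : E n) (s : ℝ) (t : ℝ) (_ : 0 < s) (_ : 0 < t),
    ENNReal.ofReal (s ^ (α - (m : ℝ)) * t ^ (β - (n : ℝ))) *
      (∫⁻ z, (tail m α c s z.1 * tail n β d t z.2) ^ q ∂ω) ^ (1 / q) *
      (∫⁻ z, (tail m α c s z.1 * tail n β d t z.2) ^ (p / (p - 1)) ∂σ) ^ (1 - 1 / p)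


section AuxiliaryLemmas

open Real in
private lemma rpow_tsum_le' {ι : Type*} [Countable ι] (f : ι → ℝ≥0∞) {ρ : ℝ} (h0 : 0 < ρ) (h1 : ρ ≤ 1) :
    (∑' i, f i) ^ ρ ≤ ∑' i, (f i) ^ ρ := by
  have two : ∀ x y : ℝ≥0∞, (x + y) ^ ρ ≤ x ^ ρ + y ^ ρ := by
    intro x y
    have hp : 1 ≤ 1 / ρ := by
      rw [le_div_iff₀ h0]; simpa using h1
    have := ENNReal.rpow_add_rpow_le_add (x ^ ρ) (y ^ ρ) hp
    have hx : (x ^ ρ) ^ (1/ρ) = x := by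
      rw [← ENNReal.rpow_mul, mul_one_div, div_self h0.ne', ENNReal.rpow_one]
    have hy : (y ^ ρ) ^ (1/ρ) = y := by
      rw [← ENNReal.rpow_mul, mul_one_div, div_self h0.ne', ENNReal.rpow_one]
    rw [hx, hy, one_div_one_div] at this
    exact this
  have fin : ∀ s : Finset ι, (∑ i ∈ s, f i) ^ ρ ≤ ∑ i ∈ s, (f i) ^ ρ := by
    intro s
    induction s using Finset.cons_induction with
    | empty => simp [ENNReal.zero_rpow_of_pos h0]
    | cons a s ha ih =>
      rw [Finset.sum_cons, Finset.sum_cons]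
      exact le_trans (two _ _) (add_le_add_right ih _)
  have key : ∀ s : Finset ι, ∑ i ∈ s, f i ≤ (∑' i, (f i) ^ ρ) ^ (1/ρ) := by
    intro s
    have h5 : (∑ i ∈ s, f i) ^ ρ ≤ ∑' i, (f i) ^ ρ :=
      le_trans (fin s) (ENNReal.sum_le_tsum s)
    calc ∑ i ∈ s, f i = ((∑ i ∈ s, f i) ^ ρ) ^ (1/ρ) := by
          rw [← ENNReal.rpow_mul, mul_one_div, div_self h0.ne', ENNReal.rpow_one]
      _ ≤ (∑' i, (f i) ^ ρ) ^ (1/ρ) := ENNReal.rpow_le_rpow h5 (by positivity)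
  have hts : ∑' i, f i ≤ (∑' i, (f i) ^ ρ) ^ (1/ρ) := by
    rw [ENNReal.tsum_eq_iSup_sum]; exact iSup_le key
  calc (∑' i, f i) ^ ρ ≤ (((∑' i, (f i) ^ ρ) ^ (1/ρ))) ^ ρ := ENNReal.rpow_le_rpow hts h0.le
    _ = ∑' i, (f i) ^ ρ := by
        rw [← ENNReal.rpow_mul, one_div_mul_cancel h0.ne', ENNReal.rpow_one]

private lemma cube_meas (m : ℕ) (c : E m) (s : ℝ) : MeasurableSet (cube m c s) := by
  have : cube m c s = ⋂ i, {x : E m | |x i - c i| ≤ s / 2} := by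
    ext x; simp [cube, Set.mem_iInter]
  rw [this]
  refine MeasurableSet.iInter fun i => ?_
  exact measurableSet_le (by fun_prop) measurable_const

private lemma norm_le_of_mem_cube {m : ℕ} {c : E m} {s : ℝ} (hs : 0 ≤ s) {x : E m}
    (hx : x ∈ cube m c s) : ‖x - c‖ ≤ Real.sqrt m * (s / 2) := by
  have h1 : ‖x - c‖ = Real.sqrt (∑ i, ‖x i - c i‖ ^ 2) := by
    rw [EuclideanSpace.norm_eq]
    congr 1
  rw [h1]
  have : (∑ i, ‖x i - c i‖ ^ 2) ≤ (m : ℝ) * (s / 2) ^ 2 := by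
    calc (∑ i, ‖x i - c i‖ ^ 2) ≤ ∑ _i : Fin m, (s / 2) ^ 2 := by
          refine Finset.sum_le_sum fun i _ => ?_
          have := hx i
          have h2 : ‖x i - c i‖ = |x i - c i| := rfl
          rw [h2]
          exact pow_le_pow_left₀ (abs_nonneg _) this 2
      _ = (m : ℝ) * (s / 2) ^ 2 := by simp [Finset.sum_const, mul_comm]
  calc Real.sqrt (∑ i, ‖x i - c i‖ ^ 2) ≤ Real.sqrt ((m : ℝ) * (s / 2) ^ 2) :=
        Real.sqrt_le_sqrt this
    _ = Real.sqrt m * (s / 2) := by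
        rw [Real.sqrt_mul (Nat.cast_nonneg m), Real.sqrt_sq (by positivity)]

private lemma mem_cube_of_norm_le {m : ℕ} {c : E m} {s : ℝ} {x : E m}
    (h : ‖x - c‖ ≤ s / 2) : x ∈ cube m c s := by
  intro i
  have h2 : |x i - c i| = Real.sqrt (‖(x - c) i‖ ^ 2) := by
    rw [Real.sqrt_sq_eq_abs]
    show |x i - c i| = |‖(x-c) i‖|
    rw [abs_norm]
    rfl
  have h3 : ‖x - c‖ = Real.sqrt (∑ j, ‖(x - c) j‖ ^ 2) := EuclideanSpace.norm_eq _
  have h4 : ‖(x - c) i‖ ^ 2 ≤ ∑ j, ‖(x - c) j‖ ^ 2 :=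
    Finset.single_le_sum (f := fun j => ‖(x - c) j‖ ^ 2) (fun j _ => by positivity)
      (Finset.mem_univ i)
  calc |x i - c i| = Real.sqrt (‖(x - c) i‖ ^ 2) := h2
    _ ≤ Real.sqrt (∑ j, ‖(x - c) j‖ ^ 2) := Real.sqrt_le_sqrt h4
    _ = ‖x - c‖ := h3.symm
    _ ≤ s / 2 := h

private lemma tail_ge_on_cube {m : ℕ} {α : ℝ} {c : E m} {s : ℝ} (hs : 0 < s) (hαm : α ≤ m)
    {x : E m} (hx : x ∈ cube m c s) :
    ENNReal.ofReal ((1 + Real.sqrt m / 2) ^ (α - (m : ℝ))) ≤ tail m α c s x := by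
  have hnorm : ‖x - c‖ ≤ Real.sqrt m * (s / 2) := norm_le_of_mem_cube hs.le hx
  apply ENNReal.ofReal_le_ofReal
  apply Real.rpow_le_rpow_of_nonpos (by positivity) ?_ (by linarith)
  have : ‖x - c‖ / s ≤ Real.sqrt m / 2 := by
    rw [div_le_iff₀ hs]
    calc ‖x - c‖ ≤ Real.sqrt m * (s / 2) := hnorm
      _ = Real.sqrt m / 2 * s := by ring
  linarith

private lemma tail_annulus {m : ℕ} {α : ℝ} {c : E m} {s : ℝ} (hs : 0 < s) (hαm : α ≤ m) (x : E m) :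
    ∃ k : ℕ, x ∈ cube m c (2 ^ (k + 1) * s) ∧
      tail m α c s x ≤ ENNReal.ofReal (2 ^ (((k : ℝ) - 1) * (α - m))) := by
  set u := ‖x - c‖ / s with hu
  have hu0 : 0 ≤ u := by positivity
  have hex : ∃ k : ℕ, u ≤ 2 ^ k := by
    obtain ⟨k, hk⟩ := pow_unbounded_of_one_lt u (one_lt_two (α := ℝ))
    exact ⟨k, hk.le⟩
  classical
  let k := Nat.find hex
  refine ⟨k, ?_, ?_⟩
  · apply mem_cube_of_norm_le
    have : u ≤ 2 ^ k := Nat.find_spec hex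
    have h2 : ‖x - c‖ ≤ 2 ^ k * s := by
      rw [hu, div_le_iff₀ hs] at this; linarith
    calc ‖x - c‖ ≤ 2 ^ k * s := h2
      _ = 2 ^ (k + 1) * s / 2 := by ring
  · have hlow : (2 : ℝ) ^ ((k : ℝ) - 1) ≤ 1 + u := by
      rcases Nat.eq_zero_or_pos k with hk0 | hk0
      · rw [hk0]
        simp only [Nat.cast_zero, zero_sub]
        rw [Real.rpow_neg_one]
        norm_num
        linarith
      · have hnot : ¬ (u ≤ 2 ^ (k - 1)) := Nat.find_min hex (Nat.sub_lt hk0 one_pos)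
        push_neg at hnot
        have : (2 : ℝ) ^ ((k : ℝ) - 1) = 2 ^ (k - 1 : ℕ) := by
          rw [← Real.rpow_natCast 2 (k - 1)]
          congr 1
          have : (1 : ℕ) ≤ k := hk0
          push_cast [Nat.cast_sub this]
          ring
        rw [this]
        linarith
    unfold tail
    apply ENNReal.ofReal_le_ofReal
    have h2 : (2:ℝ) ^ (((k : ℝ) - 1) * (α - m)) = ((2:ℝ) ^ ((k:ℝ)-1)) ^ (α - m) := by
      rw [← Real.rpow_mul (by norm_num)]
    rw [h2]
    exact Real.rpow_le_rpow_of_nonpos (by positivity) hlow (by linarith)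

private lemma lintegral_tail_pow_le {m n : ℕ} {α β : ℝ} {c : E m} {d : E n} {s t r : ℝ}
    (hs : 0 < s) (ht : 0 < t) (hαm : α ≤ m) (hβn : β ≤ n) (hr : 0 ≤ r)
    (μ : Measure (E m × E n)) :
    ∫⁻ z, (tail m α c s z.1 * tail n β d t z.2) ^ r ∂μ ≤
      ∑' kj : ℕ × ℕ, ENNReal.ofReal (2 ^ ((((kj.1 : ℝ) - 1) * (α - m) + ((kj.2 : ℝ) - 1) * (β - n)) * r)) *
        μ (cube m c (2 ^ (kj.1 + 1) * s) ×ˢ cube n d (2 ^ (kj.2 + 1) * t)) := by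
  have hpt : ∀ z : E m × E n, (tail m α c s z.1 * tail n β d t z.2) ^ r ≤
      ∑' kj : ℕ × ℕ, Set.indicator
        (cube m c (2 ^ (kj.1 + 1) * s) ×ˢ cube n d (2 ^ (kj.2 + 1) * t))
        (fun _ => ENNReal.ofReal (2 ^ ((((kj.1 : ℝ) - 1) * (α - m) + ((kj.2 : ℝ) - 1) * (β - n)) * r))) z := by
    intro z
    obtain ⟨k, hk1, hk2⟩ := tail_annulus hs hαm z.1
    obtain ⟨j, hj1, hj2⟩ := tail_annulus ht hβn z.2
    refine le_trans ?_ (ENNReal.le_tsum (⟨k, j⟩ : ℕ × ℕ))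
    rw [Set.indicator_of_mem (Set.mk_mem_prod hk1 hj1)]
    calc (tail m α c s z.1 * tail n β d t z.2) ^ r
        ≤ (ENNReal.ofReal (2 ^ (((k : ℝ) - 1) * (α - m))) *
            ENNReal.ofReal (2 ^ (((j : ℝ) - 1) * (β - n)))) ^ r :=
          ENNReal.rpow_le_rpow (mul_le_mul' hk2 hj2) hr
      _ = ENNReal.ofReal (2 ^ ((((k : ℝ) - 1) * (α - m) + ((j : ℝ) - 1) * (β - n)) * r)) := by
          rw [← ENNReal.ofReal_mul (by positivity), ← Real.rpow_add (by norm_num),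
            ENNReal.ofReal_rpow_of_pos (by positivity), ← Real.rpow_mul (by norm_num)]
  calc ∫⁻ z, (tail m α c s z.1 * tail n β d t z.2) ^ r ∂μ
      ≤ ∫⁻ z, ∑' kj : ℕ × ℕ, Set.indicator
          (cube m c (2 ^ (kj.1 + 1) * s) ×ˢ cube n d (2 ^ (kj.2 + 1) * t))
          (fun _ => ENNReal.ofReal (2 ^ ((((kj.1 : ℝ) - 1) * (α - m) + ((kj.2 : ℝ) - 1) * (β - n)) * r))) z ∂μ :=
        lintegral_mono hpt
    _ = ∑' kj : ℕ × ℕ, ∫⁻ z, Set.indicator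
          (cube m c (2 ^ (kj.1 + 1) * s) ×ˢ cube n d (2 ^ (kj.2 + 1) * t))
          (fun _ => ENNReal.ofReal (2 ^ ((((kj.1 : ℝ) - 1) * (α - m) + ((kj.2 : ℝ) - 1) * (β - n)) * r))) z ∂μ :=
        lintegral_tsum fun kj => ((measurable_const.indicator
          ((cube_meas _ _ _).prod (cube_meas _ _ _)))).aemeasurable
    _ ≤ _ := by
        refine ENNReal.tsum_le_tsum fun kj => ?_
        rw [lintegral_indicator_const ((cube_meas _ _ _).prod (cube_meas _ _ _))]

private lemma measure_le_lintegral_tail {m n : ℕ} {α β : ℝ} {c : E m} {d : E n} {s t r : ℝ}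
    (hs : 0 < s) (ht : 0 < t) (hαm : α ≤ m) (hβn : β ≤ n) (hr : 0 ≤ r)
    (μ : Measure (E m × E n)) :
    ENNReal.ofReal (((1 + Real.sqrt m / 2) ^ (α - (m:ℝ)) * (1 + Real.sqrt n / 2) ^ (β - (n:ℝ))) ^ r) *
      μ (cube m c s ×ˢ cube n d t) ≤
      ∫⁻ z, (tail m α c s z.1 * tail n β d t z.2) ^ r ∂μ := by
  rw [← lintegral_indicator_const ((cube_meas m c s).prod (cube_meas n d t))]
  apply lintegral_mono
  intro z
  rcases Classical.em (z ∈ cube m c s ×ˢ cube n d t) with hz | hz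
  · rw [Set.indicator_of_mem hz]
    have h1 := tail_ge_on_cube hs hαm hz.1
    have h2 := tail_ge_on_cube ht hβn hz.2
    calc ENNReal.ofReal (((1 + Real.sqrt m / 2) ^ (α - (m:ℝ)) * (1 + Real.sqrt n / 2) ^ (β - (n:ℝ))) ^ r)
        = (ENNReal.ofReal ((1 + Real.sqrt m / 2) ^ (α - (m:ℝ))) *
            ENNReal.ofReal ((1 + Real.sqrt n / 2) ^ (β - (n:ℝ)))) ^ r := by
          rw [← ENNReal.ofReal_mul (by positivity), ENNReal.ofReal_rpow_of_pos (by positivity)]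
      _ ≤ (tail m α c s z.1 * tail n β d t z.2) ^ r :=
          ENNReal.rpow_le_rpow (mul_le_mul' h1 h2) hr
  · rw [Set.indicator_of_notMem hz]; exact zero_le

private lemma expo_bound {a e ρ ρ' δ : ℝ} (hδ0 : 0 ≤ δ) (hδa : δ ≤ a) (hδρ : δ ≤ e * ρ)
    (hδρ' : δ ≤ e * ρ') (k k' : ℕ) :
    ((k:ℝ) - 1) * (-a) + ((k':ℝ) - 1) * (-a) + ((max k k' : ℕ) + 1) * a
      + ((k:ℝ) - (max k k' : ℕ)) * e * ρ + ((k':ℝ) - (max k k' : ℕ)) * e * ρ'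
      ≤ 3 * a - δ * (((k:ℝ) + (k':ℝ)) / 2) := by
  rcases le_total k k' with h | h
  · rw [max_eq_right h]
    have hc : (k:ℝ) ≤ (k':ℝ) := by exact_mod_cast h
    have hk0 : (0:ℝ) ≤ k := Nat.cast_nonneg k
    nlinarith [mul_nonneg (sub_nonneg.2 hc) (sub_nonneg.2 hδρ),
      mul_nonneg hk0 (sub_nonneg.2 hδa), mul_nonneg hδ0 (sub_nonneg.2 hc)]
  · rw [max_eq_left h]
    have hc : (k':ℝ) ≤ (k:ℝ) := by exact_mod_cast h
    have hk0 : (0:ℝ) ≤ k' := Nat.cast_nonneg k'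
    nlinarith [mul_nonneg (sub_nonneg.2 hc) (sub_nonneg.2 hδρ'),
      mul_nonneg hk0 (sub_nonneg.2 hδa), mul_nonneg hδ0 (sub_nonneg.2 hc)]

private lemma master_coeff {m n : ℕ} {α β ε C₀ s t ρ ρ' δ1 δ2 : ℝ}
    (hαm : α < m) (hβn : β < n) (hC₀ : 0 < C₀) (hs : 0 < s) (ht : 0 < t)
    (hρ : 0 < ρ) (hρ' : 0 < ρ')
    (hδ10 : 0 ≤ δ1) (hδ1a : δ1 ≤ (m:ℝ) - α) (hδ1ρ : δ1 ≤ (m:ℝ)*ε*ρ) (hδ1ρ' : δ1 ≤ (m:ℝ)*ε*ρ')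
    (hδ20 : 0 ≤ δ2) (hδ2a : δ2 ≤ (n:ℝ) - β) (hδ2ρ : δ2 ≤ (n:ℝ)*ε*ρ) (hδ2ρ' : δ2 ≤ (n:ℝ)*ε*ρ')
    (k j k' j' : ℕ) :
    s^(α-(m:ℝ)) * t^(β-(n:ℝ))
    * (2:ℝ)^((((k:ℝ))-1)*(α-m) + (((j:ℝ))-1)*(β-n))
    * (2:ℝ)^((((k':ℝ))-1)*(α-m) + (((j':ℝ))-1)*(β-n))
    * (C₀ * ((2^(k+1)*s)/(2^(max k k'+1)*s))^((m:ℝ)*ε) * ((2^(j+1)*t)/(2^(max j j'+1)*t))^((n:ℝ)*ε))^ρ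
    * (C₀ * ((2^(k'+1)*s)/(2^(max k k'+1)*s))^((m:ℝ)*ε) * ((2^(j'+1)*t)/(2^(max j j'+1)*t))^((n:ℝ)*ε))^ρ'
    * ((2^(max k k'+1)*s)^(α-(m:ℝ)) * (2^(max j j'+1)*t)^(β-(n:ℝ)))⁻¹
    ≤ (C₀^(ρ+ρ') * (2:ℝ)^(3*(((m:ℝ)-α)+((n:ℝ)-β))))
      * (2:ℝ)^(-(δ1/2)*(k:ℝ)) * (2:ℝ)^(-(δ1/2)*(k':ℝ))
      * (2:ℝ)^(-(δ2/2)*(j:ℝ)) * (2:ℝ)^(-(δ2/2)*(j':ℝ)) := by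
  set K := max k k' with hK
  set J := max j j' with hJ
  have h2 : (0:ℝ) < 2 := two_pos
  have hrat : ∀ (i I : ℕ) (u : ℝ), 0 < u → ((2:ℝ)^(i+1)*u)/((2:ℝ)^(I+1)*u) = (2:ℝ)^((i:ℝ)-(I:ℝ)) := by
    intro i I u hu
    rw [mul_div_mul_right _ _ hu.ne', ← Real.rpow_natCast 2 (i+1), ← Real.rpow_natCast 2 (I+1),
      ← Real.rpow_sub h2]
    congr 1
    push_cast; ring
  rw [hrat k K s hs, hrat j J t ht, hrat k' K s hs, hrat j' J t ht]
  have hnp : ∀ I : ℕ, ((2:ℝ)^(I+1) : ℝ) = (2:ℝ)^(((I:ℝ))+1) := by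
    intro I
    rw [← Real.rpow_natCast 2 (I+1)]
    push_cast
    ring_nf
  rw [hnp K, hnp J]
  have hexp : ∀ x y : ℝ, 0 < x → x ^ y = Real.exp (Real.log x * y) := fun x y hx =>
    Real.rpow_def_of_pos hx y
  rw [Real.mul_rpow (by positivity) hs.le, Real.mul_rpow (by positivity) ht.le]
  rw [Real.mul_rpow (by positivity) (by positivity), Real.mul_rpow hC₀.le (by positivity),
      Real.mul_rpow (by positivity) (by positivity), Real.mul_rpow hC₀.le (by positivity)]
  simp only [← Real.rpow_natCast (2:ℝ), ← Real.rpow_mul h2.le]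
  simp only [hexp _ _ h2, hexp _ _ hs, hexp _ _ ht, hexp _ _ hC₀]
  simp only [mul_inv, ← Real.exp_neg]
  simp only [← Real.exp_add]
  rw [Real.exp_le_exp]
  have e1 := expo_bound hδ10 hδ1a hδ1ρ hδ1ρ' k k'
  have e2 := expo_bound hδ20 hδ2a hδ2ρ hδ2ρ' j j'
  rw [← hK, ← hJ] at *
  have l2 : (0:ℝ) ≤ Real.log 2 := Real.log_nonneg one_le_two
  nlinarith [mul_le_mul_of_nonneg_right e1 l2, mul_le_mul_of_nonneg_right e2 l2]

private lemma le_ofReal_inv_mul {x : ℝ} (hx : 0 < x) {A B : ℝ≥0∞} (h : ENNReal.ofReal x * B ≤ A) :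
    B ≤ ENNReal.ofReal x⁻¹ * A := by
  calc B = ENNReal.ofReal (x⁻¹ * x) * B := by
        rw [inv_mul_cancel₀ hx.ne', ENNReal.ofReal_one, one_mul]
    _ = ENNReal.ofReal x⁻¹ * (ENNReal.ofReal x * B) := by
        rw [ENNReal.ofReal_mul (by positivity), mul_assoc]
    _ ≤ ENNReal.ofReal x⁻¹ * A := mul_le_mul_right h _

end AuxiliaryLemmas

private theorem aht_le_ant (m n : ℕ) (hm : 0 < m) (hn : 0 < n)
    (α β p q ε C₀ : ℝ) (hα : 0 < α) (hαm : α < m) (hβ : 0 < β) (hβn : β < n)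
    (hp : 1 < p) (hq : 1 < q) (hε : 0 < ε) (hC₀ : 0 < C₀) :
    ∃ C : ℝ≥0∞, C ≠ ∞ ∧
      ∀ σ ω : Measure (E m × E n),
        RectRevDoub m n ε C₀ σ → RectRevDoub m n ε C₀ ω →
        Aht m n α β p q σ ω ≤ C * Ant m n α β p q σ ω := by
  set ρ : ℝ := 1 / q with hρdef
  set ρ' : ℝ := 1 - 1 / p with hρ'def
  have hρ0 : 0 < ρ := by positivity
  have hρ1 : ρ ≤ 1 := by
    rw [hρdef]; rw [div_le_one (by linarith)]; linarith
  have hρ'0 : 0 < ρ' := by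
    rw [hρ'def]; have : 1 / p < 1 := by rw [div_lt_one (by linarith)]; linarith
    linarith
  have hρ'1 : ρ' ≤ 1 := by
    rw [hρ'def]; have : 0 < 1 / p := by positivity
    linarith
  set δ1 : ℝ := min ((m:ℝ) - α) (min ((m:ℝ)*ε*ρ) ((m:ℝ)*ε*ρ')) with hδ1def
  set δ2 : ℝ := min ((n:ℝ) - β) (min ((n:ℝ)*ε*ρ) ((n:ℝ)*ε*ρ')) with hδ2def
  have hm0 : (0:ℝ) < m := by exact_mod_cast hm
  have hn0 : (0:ℝ) < n := by exact_mod_cast hn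
  have hδ1pos : 0 < δ1 := by
    apply lt_min (by linarith) (lt_min (by positivity) (by positivity))
  have hδ2pos : 0 < δ2 := by
    apply lt_min (by linarith) (lt_min (by positivity) (by positivity))
  -- geometric sums
  set r1 : ℝ≥0∞ := ENNReal.ofReal ((2:ℝ) ^ (-(δ1/2))) with hr1def
  set r2 : ℝ≥0∞ := ENNReal.ofReal ((2:ℝ) ^ (-(δ2/2))) with hr2def
  have hr1lt : r1 < 1 := by
    rw [hr1def, ← ENNReal.ofReal_one]
    exact ENNReal.ofReal_lt_ofReal_iff_of_nonneg (by positivity) |>.2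
      (Real.rpow_lt_one_of_one_lt_of_neg one_lt_two (by linarith))
  have hr2lt : r2 < 1 := by
    rw [hr2def, ← ENNReal.ofReal_one]
    exact ENNReal.ofReal_lt_ofReal_iff_of_nonneg (by positivity) |>.2
      (Real.rpow_lt_one_of_one_lt_of_neg one_lt_two (by linarith))
  set S1 : ℝ≥0∞ := ∑' k : ℕ, r1 ^ k with hS1def
  set S2 : ℝ≥0∞ := ∑' k : ℕ, r2 ^ k with hS2def
  have hS1top : S1 ≠ ∞ := by
    rw [hS1def, ENNReal.tsum_geometric]
    simp only [ne_eq, ENNReal.inv_eq_top]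
    exact fun h => (tsub_pos_of_lt hr1lt).ne' h
  have hS2top : S2 ≠ ∞ := by
    rw [hS2def, ENNReal.tsum_geometric]
    simp only [ne_eq, ENNReal.inv_eq_top]
    exact fun h => (tsub_pos_of_lt hr2lt).ne' h
  set D : ℝ := C₀^(ρ+ρ') * (2:ℝ)^(3*(((m:ℝ)-α)+((n:ℝ)-β))) with hDdef
  refine ⟨ENNReal.ofReal D * (S1 * S2) * (S1 * S2), ?_, ?_⟩
  · exact ENNReal.mul_ne_top (ENNReal.mul_ne_top ENNReal.ofReal_ne_top
      (ENNReal.mul_ne_top hS1top hS2top)) (ENNReal.mul_ne_top hS1top hS2top)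
  intro σ ω hσ hω
  rw [Aht]
  refine iSup_le fun c => iSup_le fun d => iSup_le fun s => iSup_le fun t =>
    iSup_le fun hs => iSup_le fun ht => ?_
  have hq0 : (0:ℝ) < q := by linarith
  have hp0 : (0:ℝ) < p := by linarith
  have hr2pos : (0:ℝ) < p / (p - 1) := by
    apply div_pos hp0; linarith
  have hp1 : (0:ℝ) < p - 1 := by linarith
  have hprod : (p / (p - 1)) * ρ' = 1 := by
    rw [hρ'def]
    have h1 : 1 - 1/p = (p-1)/p := by field_simp
    rw [h1, div_mul_div_comm, mul_comm p (p-1)]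
    exact div_self (by nlinarith : ((p-1)*p) ≠ 0)
  have hQpos : ∀ (k : ℕ) (u : ℝ), 0 < u → (0:ℝ) < 2 ^ (k+1) * u := by
    intro k u hu; positivity
  set AntV := Ant m n α β p q σ ω with hAntV
  set f : ℕ × ℕ → ℝ≥0∞ := fun kj =>
    ENNReal.ofReal ((2:ℝ) ^ (((kj.1:ℝ)-1)*(α-m) + ((kj.2:ℝ)-1)*(β-n))) *
      (ω (cube m c (2 ^ (kj.1 + 1) * s) ×ˢ cube n d (2 ^ (kj.2 + 1) * t))) ^ ρ with hfdef
  set g : ℕ × ℕ → ℝ≥0∞ := fun kj =>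
    ENNReal.ofReal ((2:ℝ) ^ (((kj.1:ℝ)-1)*(α-m) + ((kj.2:ℝ)-1)*(β-n))) *
      (σ (cube m c (2 ^ (kj.1 + 1) * s) ×ˢ cube n d (2 ^ (kj.2 + 1) * t))) ^ ρ' with hgdef
  -- Step 1: tail integral bounds
  have hIω : (∫⁻ z, (tail m α c s z.1 * tail n β d t z.2) ^ q ∂ω) ^ (1/q) ≤ ∑' kj, f kj := by
    calc (∫⁻ z, (tail m α c s z.1 * tail n β d t z.2) ^ q ∂ω) ^ (1/q)
        ≤ (∑' kj : ℕ × ℕ, ENNReal.ofReal (2 ^ ((((kj.1 : ℝ) - 1) * (α - m) + ((kj.2 : ℝ) - 1) * (β - n)) * q)) *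
            ω (cube m c (2 ^ (kj.1 + 1) * s) ×ˢ cube n d (2 ^ (kj.2 + 1) * t))) ^ (1/q) :=
          ENNReal.rpow_le_rpow (lintegral_tail_pow_le hs ht hαm.le hβn.le hq0.le ω) (by positivity)
      _ ≤ ∑' kj : ℕ × ℕ, (ENNReal.ofReal (2 ^ ((((kj.1 : ℝ) - 1) * (α - m) + ((kj.2 : ℝ) - 1) * (β - n)) * q)) *
            ω (cube m c (2 ^ (kj.1 + 1) * s) ×ˢ cube n d (2 ^ (kj.2 + 1) * t))) ^ (1/q) :=
          rpow_tsum_le' _ hρ0 hρ1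
      _ = ∑' kj, f kj := by
          refine tsum_congr fun kj => ?_
          rw [hfdef]
          rw [ENNReal.mul_rpow_of_nonneg _ _ hρ0.le,
            ENNReal.ofReal_rpow_of_pos (by positivity), ← Real.rpow_mul (by norm_num)]
          have : (((kj.1:ℝ) - 1) * (α - m) + ((kj.2:ℝ) - 1) * (β - n)) * q * (1/q)
              = ((kj.1:ℝ) - 1) * (α - m) + ((kj.2:ℝ) - 1) * (β - n) := by
            field_simp
          rw [this]
  have hIσ : (∫⁻ z, (tail m α c s z.1 * tail n β d t z.2) ^ (p/(p-1)) ∂σ) ^ (1 - 1/p) ≤ ∑' kj, g kj := by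
    calc (∫⁻ z, (tail m α c s z.1 * tail n β d t z.2) ^ (p/(p-1)) ∂σ) ^ (1 - 1/p)
        ≤ (∑' kj : ℕ × ℕ, ENNReal.ofReal (2 ^ ((((kj.1 : ℝ) - 1) * (α - m) + ((kj.2 : ℝ) - 1) * (β - n)) * (p/(p-1)))) *
            σ (cube m c (2 ^ (kj.1 + 1) * s) ×ˢ cube n d (2 ^ (kj.2 + 1) * t))) ^ (1 - 1/p) :=
          ENNReal.rpow_le_rpow (lintegral_tail_pow_le hs ht hαm.le hβn.le hr2pos.le σ) hρ'0.le
      _ ≤ ∑' kj : ℕ × ℕ, (ENNReal.ofReal (2 ^ ((((kj.1 : ℝ) - 1) * (α - m) + ((kj.2 : ℝ) - 1) * (β - n)) * (p/(p-1)))) *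
            σ (cube m c (2 ^ (kj.1 + 1) * s) ×ˢ cube n d (2 ^ (kj.2 + 1) * t))) ^ (1 - 1/p) :=
          rpow_tsum_le' _ hρ'0 hρ'1
      _ = ∑' kj, g kj := by
          refine tsum_congr fun kj => ?_
          rw [hgdef]
          rw [show (1 - 1/p) = ρ' from rfl, ENNReal.mul_rpow_of_nonneg _ _ hρ'0.le,
            ENNReal.ofReal_rpow_of_pos (by positivity), ← Real.rpow_mul (by norm_num)]
          have : (((kj.1:ℝ) - 1) * (α - m) + ((kj.2:ℝ) - 1) * (β - n)) * (p/(p-1)) * ρ'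
              = ((kj.1:ℝ) - 1) * (α - m) + ((kj.2:ℝ) - 1) * (β - n) := by
            rw [mul_assoc, hprod, mul_one]
          rw [this]
  -- Step 2: per-term bound
  have perterm : ∀ kj k'j' : ℕ × ℕ,
      ENNReal.ofReal (s ^ (α - (m:ℝ)) * t ^ (β - (n:ℝ))) * f kj * g k'j' ≤
        ENNReal.ofReal ((C₀^(ρ+ρ') * (2:ℝ)^(3*(((m:ℝ)-α)+((n:ℝ)-β))))
          * (2:ℝ)^(-(δ1/2)*(kj.1:ℝ)) * (2:ℝ)^(-(δ1/2)*(k'j'.1:ℝ))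
          * (2:ℝ)^(-(δ2/2)*(kj.2:ℝ)) * (2:ℝ)^(-(δ2/2)*(k'j'.2:ℝ))) * AntV := by
    intro kj k'j'
    obtain ⟨k, j⟩ := kj
    obtain ⟨k', j'⟩ := k'j'
    set K := max k k' with hKdef
    set J := max j j' with hJdef
    -- reverse doubling
    have hle1 : (2:ℝ) ^ (k+1) * s ≤ 2 ^ (K+1) * s := by
      apply mul_le_mul_of_nonneg_right _ hs.le
      exact pow_le_pow_right₀ one_le_two (Nat.succ_le_succ (le_max_left _ _))
    have hle1' : (2:ℝ) ^ (k'+1) * s ≤ 2 ^ (K+1) * s := by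
      apply mul_le_mul_of_nonneg_right _ hs.le
      exact pow_le_pow_right₀ one_le_two (Nat.succ_le_succ (le_max_right _ _))
    have hle2 : (2:ℝ) ^ (j+1) * t ≤ 2 ^ (J+1) * t := by
      apply mul_le_mul_of_nonneg_right _ ht.le
      exact pow_le_pow_right₀ one_le_two (Nat.succ_le_succ (le_max_left _ _))
    have hle2' : (2:ℝ) ^ (j'+1) * t ≤ 2 ^ (J+1) * t := by
      apply mul_le_mul_of_nonneg_right _ ht.le
      exact pow_le_pow_right₀ one_le_two (Nat.succ_le_succ (le_max_right _ _))
    have hrevω := hω c d (2^(K+1)*s) (2^(J+1)*t) (2^(k+1)*s) (2^(j+1)*t)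
      (hQpos k s hs) hle1 (hQpos j t ht) hle2
    have hrevσ := hσ c d (2^(K+1)*s) (2^(J+1)*t) (2^(k'+1)*s) (2^(j'+1)*t)
      (hQpos k' s hs) hle1' (hQpos j' t ht) hle2'
    set ωKJ := ω (cube m c (2 ^ (K + 1) * s) ×ˢ cube n d (2 ^ (J + 1) * t)) with hωKJ
    set σKJ := σ (cube m c (2 ^ (K + 1) * s) ×ˢ cube n d (2 ^ (J + 1) * t)) with hσKJ
    -- Ant witness
    have hAnt : ENNReal.ofReal ((2 ^ (K+1) * s) ^ (α - (m:ℝ)) * (2 ^ (J+1) * t) ^ (β - (n:ℝ))) *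
        ωKJ ^ ρ * σKJ ^ ρ' ≤ AntV := by
      rw [hAntV, Ant, hρdef, hρ'def]
      exact le_iSup_of_le c (le_iSup_of_le d (le_iSup_of_le (2^(K+1)*s)
        (le_iSup_of_le (2^(J+1)*t) (le_iSup_of_le (hQpos K s hs)
          (le_iSup_of_le (hQpos J t ht) le_rfl)))))
    have hB : ωKJ ^ ρ * σKJ ^ ρ' ≤
        ENNReal.ofReal (((2 ^ (K+1) * s) ^ (α - (m:ℝ)) * (2 ^ (J+1) * t) ^ (β - (n:ℝ)))⁻¹) * AntV := by
      apply le_ofReal_inv_mul (by positivity)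
      rw [← mul_assoc]
      exact hAnt
    -- coefficient names
    set Cw : ℝ := C₀ * ((2^(k+1)*s)/(2^(K+1)*s))^((m:ℝ)*ε) * ((2^(j+1)*t)/(2^(J+1)*t))^((n:ℝ)*ε) with hCwdef
    set Cs : ℝ := C₀ * ((2^(k'+1)*s)/(2^(K+1)*s))^((m:ℝ)*ε) * ((2^(j'+1)*t)/(2^(J+1)*t))^((n:ℝ)*ε) with hCsdef
    have hCwpos : 0 < Cw := by rw [hCwdef]; positivity
    have hCspos : 0 < Cs := by rw [hCsdef]; positivity
    have hfb : f (k, j) ≤ ENNReal.ofReal ((2:ℝ) ^ (((k:ℝ)-1)*(α-m) + ((j:ℝ)-1)*(β-n))) *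
        (ENNReal.ofReal Cw ^ ρ * ωKJ ^ ρ) := by
      rw [hfdef]
      refine mul_le_mul_right ?_ _
      rw [← ENNReal.mul_rpow_of_nonneg _ _ hρ0.le]
      exact ENNReal.rpow_le_rpow hrevω hρ0.le
    have hgb : g (k', j') ≤ ENNReal.ofReal ((2:ℝ) ^ (((k':ℝ)-1)*(α-m) + ((j':ℝ)-1)*(β-n))) *
        (ENNReal.ofReal Cs ^ ρ' * σKJ ^ ρ') := by
      rw [hgdef]
      refine mul_le_mul_right ?_ _
      rw [← ENNReal.mul_rpow_of_nonneg _ _ hρ'0.le]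
      exact ENNReal.rpow_le_rpow hrevσ hρ'0.le
    calc ENNReal.ofReal (s ^ (α - (m:ℝ)) * t ^ (β - (n:ℝ))) * f (k, j) * g (k', j')
        ≤ ENNReal.ofReal (s ^ (α - (m:ℝ)) * t ^ (β - (n:ℝ))) *
            (ENNReal.ofReal ((2:ℝ) ^ (((k:ℝ)-1)*(α-m) + ((j:ℝ)-1)*(β-n))) *
              (ENNReal.ofReal Cw ^ ρ * ωKJ ^ ρ)) *
            (ENNReal.ofReal ((2:ℝ) ^ (((k':ℝ)-1)*(α-m) + ((j':ℝ)-1)*(β-n))) *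
              (ENNReal.ofReal Cs ^ ρ' * σKJ ^ ρ')) :=
          mul_le_mul' (mul_le_mul_right hfb _) hgb
      _ = (ENNReal.ofReal (s ^ (α - (m:ℝ)) * t ^ (β - (n:ℝ))) *
            ENNReal.ofReal ((2:ℝ) ^ (((k:ℝ)-1)*(α-m) + ((j:ℝ)-1)*(β-n))) *
            ENNReal.ofReal ((2:ℝ) ^ (((k':ℝ)-1)*(α-m) + ((j':ℝ)-1)*(β-n))) *
            ENNReal.ofReal Cw ^ ρ * ENNReal.ofReal Cs ^ ρ') * (ωKJ ^ ρ * σKJ ^ ρ') := by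
          ring
      _ ≤ (ENNReal.ofReal (s ^ (α - (m:ℝ)) * t ^ (β - (n:ℝ))) *
            ENNReal.ofReal ((2:ℝ) ^ (((k:ℝ)-1)*(α-m) + ((j:ℝ)-1)*(β-n))) *
            ENNReal.ofReal ((2:ℝ) ^ (((k':ℝ)-1)*(α-m) + ((j':ℝ)-1)*(β-n))) *
            ENNReal.ofReal Cw ^ ρ * ENNReal.ofReal Cs ^ ρ') *
            (ENNReal.ofReal (((2 ^ (K+1) * s) ^ (α - (m:ℝ)) * (2 ^ (J+1) * t) ^ (β - (n:ℝ)))⁻¹) * AntV) :=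
          mul_le_mul_right hB _
      _ = ENNReal.ofReal (s ^ (α - (m:ℝ)) * t ^ (β - (n:ℝ))
            * (2:ℝ) ^ (((k:ℝ)-1)*(α-m) + ((j:ℝ)-1)*(β-n))
            * (2:ℝ) ^ (((k':ℝ)-1)*(α-m) + ((j':ℝ)-1)*(β-n))
            * Cw ^ ρ * Cs ^ ρ'
            * ((2 ^ (K+1) * s) ^ (α - (m:ℝ)) * (2 ^ (J+1) * t) ^ (β - (n:ℝ)))⁻¹) * AntV := by
          rw [ENNReal.ofReal_rpow_of_pos hCwpos, ENNReal.ofReal_rpow_of_pos hCspos,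
            ← ENNReal.ofReal_mul (by positivity), ← ENNReal.ofReal_mul (by positivity),
            ← ENNReal.ofReal_mul (by positivity), ← ENNReal.ofReal_mul (by positivity)]
          have hcollapse : ENNReal.ofReal ((s ^ (α - (m:ℝ)) * t ^ (β - (n:ℝ))
              * (2:ℝ) ^ (((k:ℝ)-1)*(α-m) + ((j:ℝ)-1)*(β-n))
              * (2:ℝ) ^ (((k':ℝ)-1)*(α-m) + ((j':ℝ)-1)*(β-n))
              * Cw ^ ρ * Cs ^ ρ')
              * ((2 ^ (K+1) * s) ^ (α - (m:ℝ)) * (2 ^ (J+1) * t) ^ (β - (n:ℝ)))⁻¹)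
              = ENNReal.ofReal (s ^ (α - (m:ℝ)) * t ^ (β - (n:ℝ))
              * (2:ℝ) ^ (((k:ℝ)-1)*(α-m) + ((j:ℝ)-1)*(β-n))
              * (2:ℝ) ^ (((k':ℝ)-1)*(α-m) + ((j':ℝ)-1)*(β-n))
              * Cw ^ ρ * Cs ^ ρ')
              * ENNReal.ofReal (((2 ^ (K+1) * s) ^ (α - (m:ℝ)) * (2 ^ (J+1) * t) ^ (β - (n:ℝ)))⁻¹) :=
            ENNReal.ofReal_mul (by positivity)
          rw [show (s ^ (α - (m:ℝ)) * t ^ (β - (n:ℝ))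
              * (2:ℝ) ^ (((k:ℝ)-1)*(α-m) + ((j:ℝ)-1)*(β-n))
              * (2:ℝ) ^ (((k':ℝ)-1)*(α-m) + ((j':ℝ)-1)*(β-n))
              * Cw ^ ρ * Cs ^ ρ'
              * ((2 ^ (K+1) * s) ^ (α - (m:ℝ)) * (2 ^ (J+1) * t) ^ (β - (n:ℝ)))⁻¹)
              = ((s ^ (α - (m:ℝ)) * t ^ (β - (n:ℝ))
              * (2:ℝ) ^ (((k:ℝ)-1)*(α-m) + ((j:ℝ)-1)*(β-n))
              * (2:ℝ) ^ (((k':ℝ)-1)*(α-m) + ((j':ℝ)-1)*(β-n))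
              * Cw ^ ρ * Cs ^ ρ')
              * ((2 ^ (K+1) * s) ^ (α - (m:ℝ)) * (2 ^ (J+1) * t) ^ (β - (n:ℝ)))⁻¹) from by ring,
            hcollapse]
          ring
      _ ≤ ENNReal.ofReal ((C₀^(ρ+ρ') * (2:ℝ)^(3*(((m:ℝ)-α)+((n:ℝ)-β))))
            * (2:ℝ)^(-(δ1/2)*(k:ℝ)) * (2:ℝ)^(-(δ1/2)*(k':ℝ))
            * (2:ℝ)^(-(δ2/2)*(j:ℝ)) * (2:ℝ)^(-(δ2/2)*(j':ℝ))) * AntV := by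
          refine mul_le_mul_left (ENNReal.ofReal_le_ofReal ?_) _
          rw [hCwdef, hCsdef, hKdef, hJdef]
          have h1 : s ^ (α-(m:ℝ)) * t ^ (β-(n:ℝ)) * (2:ℝ) ^ (((k:ℝ)-1)*(α-m) + ((j:ℝ)-1)*(β-n)) *
              (2:ℝ) ^ (((k':ℝ)-1)*(α-m) + ((j':ℝ)-1)*(β-n)) = s ^ (α-(m:ℝ)) * t ^ (β-(n:ℝ)) *
              (2:ℝ) ^ (((k:ℝ)-1)*(α-m) + ((j:ℝ)-1)*(β-n)) *
              (2:ℝ) ^ (((k':ℝ)-1)*(α-m) + ((j':ℝ)-1)*(β-n)) := rfl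
          exact master_coeff hαm hβn hC₀ hs ht hρ0 hρ'0
            hδ1pos.le (min_le_left _ _) (le_trans (min_le_right _ _) (min_le_left _ _))
            (le_trans (min_le_right _ _) (min_le_right _ _))
            hδ2pos.le (min_le_left _ _) (le_trans (min_le_right _ _) (min_le_left _ _))
            (le_trans (min_le_right _ _) (min_le_right _ _)) k j k' j'
  -- Step 3: assemble
  have geo1 : ∀ x : ℕ, ENNReal.ofReal ((2:ℝ)^(-(δ1/2)*(x:ℝ))) = r1 ^ x := by
    intro x
    rw [hr1def, ← ENNReal.ofReal_pow (by positivity)]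
    congr 1
    rw [← Real.rpow_natCast ((2:ℝ)^(-(δ1/2))) x, ← Real.rpow_mul (by norm_num)]
  have geo2 : ∀ x : ℕ, ENNReal.ofReal ((2:ℝ)^(-(δ2/2)*(x:ℝ))) = r2 ^ x := by
    intro x
    rw [hr2def, ← ENNReal.ofReal_pow (by positivity)]
    congr 1
    rw [← Real.rpow_natCast ((2:ℝ)^(-(δ2/2))) x, ← Real.rpow_mul (by norm_num)]
  have pairsum : ∑' (kj : ℕ × ℕ), r1 ^ kj.1 * r2 ^ kj.2 = S1 * S2 := by
    rw [ENNReal.tsum_prod']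
    calc ∑' (k : ℕ), ∑' (j : ℕ), r1 ^ k * r2 ^ j
        = ∑' (k : ℕ), r1 ^ k * S2 := by
          refine tsum_congr fun k => ?_
          rw [ENNReal.tsum_mul_left, hS2def]
      _ = S1 * S2 := by rw [ENNReal.tsum_mul_right, hS1def]
  calc ENNReal.ofReal (s ^ (α - (m:ℝ)) * t ^ (β - (n:ℝ))) *
        (∫⁻ z, (tail m α c s z.1 * tail n β d t z.2) ^ q ∂ω) ^ (1/q) *
        (∫⁻ z, (tail m α c s z.1 * tail n β d t z.2) ^ (p/(p-1)) ∂σ) ^ (1 - 1/p)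
      ≤ ENNReal.ofReal (s ^ (α - (m:ℝ)) * t ^ (β - (n:ℝ))) * (∑' kj, f kj) * (∑' kj, g kj) :=
        mul_le_mul' (mul_le_mul_right hIω _) hIσ
    _ = ∑' kj : ℕ × ℕ, ∑' k'j' : ℕ × ℕ,
        ENNReal.ofReal (s ^ (α - (m:ℝ)) * t ^ (β - (n:ℝ))) * f kj * g k'j' := by
        rw [← ENNReal.tsum_mul_left (a := ENNReal.ofReal (s ^ (α - (m:ℝ)) * t ^ (β - (n:ℝ)))),
          ← ENNReal.tsum_mul_right]
        exact tsum_congr fun kj => ENNReal.tsum_mul_left.symm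
    _ ≤ ∑' kj : ℕ × ℕ, ∑' k'j' : ℕ × ℕ,
        ENNReal.ofReal ((C₀^(ρ+ρ') * (2:ℝ)^(3*(((m:ℝ)-α)+((n:ℝ)-β))))
          * (2:ℝ)^(-(δ1/2)*(kj.1:ℝ)) * (2:ℝ)^(-(δ1/2)*(k'j'.1:ℝ))
          * (2:ℝ)^(-(δ2/2)*(kj.2:ℝ)) * (2:ℝ)^(-(δ2/2)*(k'j'.2:ℝ))) * AntV :=
        ENNReal.tsum_le_tsum fun kj => ENNReal.tsum_le_tsum fun k'j' => perterm kj k'j'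
    _ = (ENNReal.ofReal D * (S1 * S2) * (S1 * S2)) * AntV := by
        have expand : ∀ kj k'j' : ℕ × ℕ,
            ENNReal.ofReal ((C₀^(ρ+ρ') * (2:ℝ)^(3*(((m:ℝ)-α)+((n:ℝ)-β))))
              * (2:ℝ)^(-(δ1/2)*(kj.1:ℝ)) * (2:ℝ)^(-(δ1/2)*(k'j'.1:ℝ))
              * (2:ℝ)^(-(δ2/2)*(kj.2:ℝ)) * (2:ℝ)^(-(δ2/2)*(k'j'.2:ℝ))) =
            (ENNReal.ofReal D * (r1 ^ kj.1 * r2 ^ kj.2)) * (r1 ^ k'j'.1 * r2 ^ k'j'.2) := by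
          intro kj k'j'
          rw [hDdef, ENNReal.ofReal_mul (by positivity), ENNReal.ofReal_mul (by positivity),
            ENNReal.ofReal_mul (by positivity), ENNReal.ofReal_mul (by positivity),
            geo1, geo1, geo2, geo2]
          ring
        calc ∑' kj : ℕ × ℕ, ∑' k'j' : ℕ × ℕ,
            ENNReal.ofReal ((C₀^(ρ+ρ') * (2:ℝ)^(3*(((m:ℝ)-α)+((n:ℝ)-β))))
              * (2:ℝ)^(-(δ1/2)*(kj.1:ℝ)) * (2:ℝ)^(-(δ1/2)*(k'j'.1:ℝ))
              * (2:ℝ)^(-(δ2/2)*(kj.2:ℝ)) * (2:ℝ)^(-(δ2/2)*(k'j'.2:ℝ))) * AntV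
            = ∑' kj : ℕ × ℕ, ∑' k'j' : ℕ × ℕ,
              ((ENNReal.ofReal D * (r1 ^ kj.1 * r2 ^ kj.2)) * (r1 ^ k'j'.1 * r2 ^ k'j'.2)) * AntV := by
              exact tsum_congr fun kj => tsum_congr fun k'j' => by rw [expand kj k'j']
          _ = ∑' kj : ℕ × ℕ, (ENNReal.ofReal D * (r1 ^ kj.1 * r2 ^ kj.2)) * ((S1 * S2) * AntV) := by
              refine tsum_congr fun kj => ?_
              rw [← pairsum, ← ENNReal.tsum_mul_right, ← ENNReal.tsum_mul_left]
              exact tsum_congr fun k'j' => by ring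
          _ = (ENNReal.ofReal D * (S1 * S2) * (S1 * S2)) * AntV := by
              have hcomm : ∀ kj : ℕ × ℕ,
                  (ENNReal.ofReal D * (r1 ^ kj.1 * r2 ^ kj.2)) * ((S1 * S2) * AntV) =
                  (r1 ^ kj.1 * r2 ^ kj.2) * (ENNReal.ofReal D * ((S1 * S2) * AntV)) :=
                fun kj => by ring
              rw [tsum_congr hcomm, ENNReal.tsum_mul_right, pairsum]
              ring

/-- **Equivalence of the no-tail, one-tail and two-tail characteristics under rectangle
reverse doubling.**  If `σ` and `ω` are rectangle reverse doubling with constant `C₀` and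
exponent `ε > 0`, and `0 < α < m`, `0 < β < n`, `1 < p, q < ∞`, then
`Â ≈ Ā ≈ A` with constants depending only on `m, n, α, β, p, q, ε, C₀`. -/
theorem characteristics_equivalent_revDoubling (m n : ℕ) (hm : 0 < m) (hn : 0 < n)
    (α β p q ε C₀ : ℝ) (hα : 0 < α) (hαm : α < m) (hβ : 0 < β) (hβn : β < n)
    (hp : 1 < p) (hq : 1 < q) (hε : 0 < ε) (hC₀ : 0 < C₀) :
    ∃ C : ℝ≥0∞, C ≠ ∞ ∧
      ∀ σ ω : Measure (E m × E n),
        RectRevDoub m n ε C₀ σ → RectRevDoub m n ε C₀ ω →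
        Aht m n α β p q σ ω ≤ C * Aot m n α β p q σ ω ∧
          Aot m n α β p q σ ω ≤ C * Ant m n α β p q σ ω ∧
          Ant m n α β p q σ ω ≤ C * Aht m n α β p q σ ω := by
  obtain ⟨CH, hCHtop, hCH⟩ := aht_le_ant m n hm hn α β p q ε C₀ hα hαm hβ hβn hp hq hε hC₀
  have hq0 : (0:ℝ) < q := by linarith
  have hp0 : (0:ℝ) < p := by linarith
  have hρ'0 : (0:ℝ) < 1 - 1/p := by
    have : 1/p < 1 := by rw [div_lt_one hp0]; linarith
    linarith
  have hr2pos : (0:ℝ) < p/(p-1) := div_pos hp0 (by linarith)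
  have hprod : (p/(p-1)) * (1 - 1/p) = 1 := by
    have h1 : 1 - 1/p = (p-1)/p := by field_simp
    rw [h1, div_mul_div_comm, mul_comm p (p-1)]
    exact div_self (by nlinarith : ((p-1)*p) ≠ 0)
  have hqprod : q * (1/q) = 1 := mul_one_div_cancel hq0.ne'
  set cst : ℝ := (1 + Real.sqrt m / 2) ^ (α - (m:ℝ)) * (1 + Real.sqrt n / 2) ^ (β - (n:ℝ))
    with hcstdef
  have hcst : 0 < cst := by rw [hcstdef]; positivity
  set Ci : ℝ≥0∞ := ENNReal.ofReal cst⁻¹ with hCidef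
  have hCitop : Ci ≠ ⊤ := ENNReal.ofReal_ne_top
  refine ⟨CH * Ci + 2 * Ci * CH + Ci * Ci, ?_, ?_⟩
  · refine ENNReal.add_ne_top.2 ⟨ENNReal.add_ne_top.2 ⟨ENNReal.mul_ne_top hCHtop hCitop, ?_⟩,
      ENNReal.mul_ne_top hCitop hCitop⟩
    exact ENNReal.mul_ne_top (ENNReal.mul_ne_top ENNReal.ofNat_ne_top hCitop) hCHtop
  intro σ ω hσ hω
  have hAhtAnt := hCH σ ω hσ hω
  set AntV := Ant m n α β p q σ ω with hAntV
  set AhtV := Aht m n α β p q σ ω with hAhtV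
  set AotV := Aot m n α β p q σ ω with hAotV
  -- key: the tail integral dominates the plain measure of the cube
  have hkey : ∀ (μ : Measure (E m × E n)) (c : E m) (d : E n) (s t : ℝ), 0 < s → 0 < t →
      ∀ r ι : ℝ, 0 < r → 0 < ι → r * ι = 1 →
      ENNReal.ofReal cst * (μ (cube m c s ×ˢ cube n d t)) ^ ι ≤
        (∫⁻ z, (tail m α c s z.1 * tail n β d t z.2) ^ r ∂μ) ^ ι := by
    intro μ c d s t hs ht r ι hr hι hri
    have h0 := measure_le_lintegral_tail (c := c) (d := d) hs ht hαm.le hβn.le hr.le μ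
    calc ENNReal.ofReal cst * (μ (cube m c s ×ˢ cube n d t)) ^ ι
        = (ENNReal.ofReal (cst ^ r) * μ (cube m c s ×ˢ cube n d t)) ^ ι := by
          rw [ENNReal.mul_rpow_of_nonneg _ _ hι.le, ENNReal.ofReal_rpow_of_pos (by positivity),
            ← Real.rpow_mul hcst.le, hri, Real.rpow_one]
      _ ≤ _ := ENNReal.rpow_le_rpow h0 hι.le
  -- part 3 : Ant ≤ Ci * Ci * Aht
  have part3 : AntV ≤ (Ci * Ci) * AhtV := by
    rw [hAntV, Ant]
    refine iSup_le fun c => iSup_le fun d => iSup_le fun s => iSup_le fun t =>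
      iSup_le fun hs => iSup_le fun ht => ?_
    have h1 := hkey ω c d s t hs ht q (1/q) hq0 (by positivity) hqprod
    have h2 := hkey σ c d s t hs ht (p/(p-1)) (1-1/p) hr2pos hρ'0 hprod
    have h3 : ENNReal.ofReal (cst * cst) *
        (ENNReal.ofReal (s ^ (α - (m:ℝ)) * t ^ (β - (n:ℝ))) *
          (ω (cube m c s ×ˢ cube n d t)) ^ (1/q) *
          (σ (cube m c s ×ˢ cube n d t)) ^ (1 - 1/p)) ≤ AhtV := by
      calc ENNReal.ofReal (cst * cst) *
          (ENNReal.ofReal (s ^ (α - (m:ℝ)) * t ^ (β - (n:ℝ))) *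
            (ω (cube m c s ×ˢ cube n d t)) ^ (1/q) *
            (σ (cube m c s ×ˢ cube n d t)) ^ (1 - 1/p))
          = ENNReal.ofReal (s ^ (α - (m:ℝ)) * t ^ (β - (n:ℝ))) *
              (ENNReal.ofReal cst * (ω (cube m c s ×ˢ cube n d t)) ^ (1/q)) *
              (ENNReal.ofReal cst * (σ (cube m c s ×ˢ cube n d t)) ^ (1 - 1/p)) := by
            rw [ENNReal.ofReal_mul hcst.le]; ring
        _ ≤ ENNReal.ofReal (s ^ (α - (m:ℝ)) * t ^ (β - (n:ℝ))) *
              (∫⁻ z, (tail m α c s z.1 * tail n β d t z.2) ^ q ∂ω) ^ (1/q) *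
              (∫⁻ z, (tail m α c s z.1 * tail n β d t z.2) ^ (p/(p-1)) ∂σ) ^ (1 - 1/p) :=
            mul_le_mul' (mul_le_mul_right h1 _) h2
        _ ≤ AhtV := by
            rw [hAhtV, Aht]
            exact le_iSup_of_le c (le_iSup_of_le d (le_iSup_of_le s (le_iSup_of_le t
              (le_iSup_of_le hs (le_iSup_of_le ht le_rfl)))))
    have h4 := le_ofReal_inv_mul (by positivity : (0:ℝ) < cst * cst) h3
    calc ENNReal.ofReal (s ^ (α - (m:ℝ)) * t ^ (β - (n:ℝ))) *
          (ω (cube m c s ×ˢ cube n d t)) ^ (1/q) *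
          (σ (cube m c s ×ˢ cube n d t)) ^ (1 - 1/p)
        ≤ ENNReal.ofReal ((cst * cst)⁻¹) * AhtV := h4
      _ = (Ci * Ci) * AhtV := by
          rw [hCidef, mul_inv, ENNReal.ofReal_mul (by positivity)]
  -- part A : Ant ≤ Ci * Aot
  have partA : AntV ≤ Ci * AotV := by
    rw [hAntV, Ant]
    refine iSup_le fun c => iSup_le fun d => iSup_le fun s => iSup_le fun t =>
      iSup_le fun hs => iSup_le fun ht => ?_
    have h1 := hkey ω c d s t hs ht q (1/q) hq0 (by positivity) hqprod
    have h3 : ENNReal.ofReal cst *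
        (ENNReal.ofReal (s ^ (α - (m:ℝ)) * t ^ (β - (n:ℝ))) *
          (ω (cube m c s ×ˢ cube n d t)) ^ (1/q) *
          (σ (cube m c s ×ˢ cube n d t)) ^ (1 - 1/p)) ≤ AotV := by
      calc ENNReal.ofReal cst *
          (ENNReal.ofReal (s ^ (α - (m:ℝ)) * t ^ (β - (n:ℝ))) *
            (ω (cube m c s ×ˢ cube n d t)) ^ (1/q) *
            (σ (cube m c s ×ˢ cube n d t)) ^ (1 - 1/p))
          = ENNReal.ofReal (s ^ (α - (m:ℝ)) * t ^ (β - (n:ℝ))) *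
              (ENNReal.ofReal cst * (ω (cube m c s ×ˢ cube n d t)) ^ (1/q)) *
              (σ (cube m c s ×ˢ cube n d t)) ^ (1 - 1/p) := by ring
        _ ≤ ENNReal.ofReal (s ^ (α - (m:ℝ)) * t ^ (β - (n:ℝ))) *
              (∫⁻ z, (tail m α c s z.1 * tail n β d t z.2) ^ q ∂ω) ^ (1/q) *
              (σ (cube m c s ×ˢ cube n d t)) ^ (1 - 1/p) :=
            mul_le_mul_left (mul_le_mul_right h1 _) _
        _ ≤ AotV := by
            rw [hAotV, Aot]
            refine le_trans ?_ le_self_add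
            exact le_iSup_of_le c (le_iSup_of_le d (le_iSup_of_le s (le_iSup_of_le t
              (le_iSup_of_le hs (le_iSup_of_le ht le_rfl)))))
    exact le_ofReal_inv_mul hcst h3
  -- part B : Aot ≤ (2 * Ci) * Aht
  have partB : AotV ≤ (2 * Ci) * AhtV := by
    rw [hAotV, Aot]
    have b1 : (⨆ (c : E m) (d : E n) (s : ℝ) (t : ℝ) (_ : 0 < s) (_ : 0 < t),
        ENNReal.ofReal (s ^ (α - (m : ℝ)) * t ^ (β - (n : ℝ))) *
          (∫⁻ z, (tail m α c s z.1 * tail n β d t z.2) ^ q ∂ω) ^ (1 / q) *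
          (σ (cube m c s ×ˢ cube n d t)) ^ (1 - 1 / p)) ≤ Ci * AhtV := by
      refine iSup_le fun c => iSup_le fun d => iSup_le fun s => iSup_le fun t =>
        iSup_le fun hs => iSup_le fun ht => ?_
      have h2 := hkey σ c d s t hs ht (p/(p-1)) (1-1/p) hr2pos hρ'0 hprod
      refine le_ofReal_inv_mul hcst ?_
      calc ENNReal.ofReal cst *
          (ENNReal.ofReal (s ^ (α - (m:ℝ)) * t ^ (β - (n:ℝ))) *
            (∫⁻ z, (tail m α c s z.1 * tail n β d t z.2) ^ q ∂ω) ^ (1/q) *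
            (σ (cube m c s ×ˢ cube n d t)) ^ (1 - 1/p))
          = ENNReal.ofReal (s ^ (α - (m:ℝ)) * t ^ (β - (n:ℝ))) *
              (∫⁻ z, (tail m α c s z.1 * tail n β d t z.2) ^ q ∂ω) ^ (1/q) *
              (ENNReal.ofReal cst * (σ (cube m c s ×ˢ cube n d t)) ^ (1 - 1/p)) := by ring
        _ ≤ ENNReal.ofReal (s ^ (α - (m:ℝ)) * t ^ (β - (n:ℝ))) *
              (∫⁻ z, (tail m α c s z.1 * tail n β d t z.2) ^ q ∂ω) ^ (1/q) *
              (∫⁻ z, (tail m α c s z.1 * tail n β d t z.2) ^ (p/(p-1)) ∂σ) ^ (1 - 1/p) :=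
            mul_le_mul_right h2 _
        _ ≤ AhtV := by
            rw [hAhtV, Aht]
            exact le_iSup_of_le c (le_iSup_of_le d (le_iSup_of_le s (le_iSup_of_le t
              (le_iSup_of_le hs (le_iSup_of_le ht le_rfl)))))
    have b2 : (⨆ (c : E m) (d : E n) (s : ℝ) (t : ℝ) (_ : 0 < s) (_ : 0 < t),
        ENNReal.ofReal (s ^ (α - (m : ℝ)) * t ^ (β - (n : ℝ))) *
          (ω (cube m c s ×ˢ cube n d t)) ^ (1 / q) *
          (∫⁻ z, (tail m α c s z.1 * tail n β d t z.2) ^ (p / (p - 1)) ∂σ) ^ (1 - 1 / p)) ≤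
        Ci * AhtV := by
      refine iSup_le fun c => iSup_le fun d => iSup_le fun s => iSup_le fun t =>
        iSup_le fun hs => iSup_le fun ht => ?_
      have h1 := hkey ω c d s t hs ht q (1/q) hq0 (by positivity) hqprod
      refine le_ofReal_inv_mul hcst ?_
      calc ENNReal.ofReal cst *
          (ENNReal.ofReal (s ^ (α - (m:ℝ)) * t ^ (β - (n:ℝ))) *
            (ω (cube m c s ×ˢ cube n d t)) ^ (1/q) *
            (∫⁻ z, (tail m α c s z.1 * tail n β d t z.2) ^ (p/(p-1)) ∂σ) ^ (1 - 1/p))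
          = ENNReal.ofReal (s ^ (α - (m:ℝ)) * t ^ (β - (n:ℝ))) *
              (ENNReal.ofReal cst * (ω (cube m c s ×ˢ cube n d t)) ^ (1/q)) *
              (∫⁻ z, (tail m α c s z.1 * tail n β d t z.2) ^ (p/(p-1)) ∂σ) ^ (1 - 1/p) := by
            ring
        _ ≤ ENNReal.ofReal (s ^ (α - (m:ℝ)) * t ^ (β - (n:ℝ))) *
              (∫⁻ z, (tail m α c s z.1 * tail n β d t z.2) ^ q ∂ω) ^ (1/q) *
              (∫⁻ z, (tail m α c s z.1 * tail n β d t z.2) ^ (p/(p-1)) ∂σ) ^ (1 - 1/p) :=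
            mul_le_mul_left (mul_le_mul_right h1 _) _
        _ ≤ AhtV := by
            rw [hAhtV, Aht]
            exact le_iSup_of_le c (le_iSup_of_le d (le_iSup_of_le s (le_iSup_of_le t
              (le_iSup_of_le hs (le_iSup_of_le ht le_rfl)))))
    calc _ ≤ Ci * AhtV + Ci * AhtV := add_le_add b1 b2
      _ = (2 * Ci) * AhtV := by ring
  refine ⟨?_, ?_, ?_⟩
  · calc AhtV ≤ CH * AntV := hAhtAnt
      _ ≤ CH * (Ci * AotV) := mul_le_mul_right partA _
      _ = (CH * Ci) * AotV := by ring
      _ ≤ (CH * Ci + 2 * Ci * CH + Ci * Ci) * AotV :=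
        mul_le_mul_left (le_trans le_self_add le_self_add) _
  · calc AotV ≤ (2 * Ci) * AhtV := partB
      _ ≤ (2 * Ci) * (CH * AntV) := mul_le_mul_right hAhtAnt _
      _ = (2 * Ci * CH) * AntV := by ring
      _ ≤ (CH * Ci + 2 * Ci * CH + Ci * Ci) * AntV :=
        mul_le_mul_left (le_trans le_add_self le_self_add) _
  · calc AntV ≤ (Ci * Ci) * AhtV := part3
      _ ≤ (CH * Ci + 2 * Ci * CH + Ci * Ci) * AhtV := mul_le_mul_left le_add_self _

end
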